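/- Let Π be the Poincaré return map of the periodic orbit r = 0 of dr/dθ = F(r,θ) over the cylinder with period T, and let V be an inverse integrating factor defined in a neighborhood of r = 0. Then V(Π(r₀), T) = V(r₀, 0) · Π'(r₀) for all r₀ in a neighborhood of 0. -/

import Mathlib

open Real Set


/-- Partial derivative in the first variable, as a function on the plane. -/
noncomputable def pd1 (F : ℝ → ℝ → ℝ) : ℝ × ℝ → ℝ :=
  fun p => fderiv ℝ (fun q : ℝ × ℝ => F q.1 q.2) p (1, 0)

/-- Partial derivative in the second variable. -/
noncomputable def pd2 (F : ℝ → ℝ → ℝ) : ℝ × ℝ → ℝ :=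
  fun p => fderiv ℝ (fun q : ℝ × ℝ => F q.1 q.2) p (0, 1)

lemma hasDerivAt_pd1 {F : ℝ → ℝ → ℝ} (hF : ContDiff ℝ 1 fun p : ℝ × ℝ => F p.1 p.2)
    (r θ : ℝ) : HasDerivAt (fun s => F s θ) (pd1 F (r, θ)) r := by
  have h1 : HasFDerivAt (fun q : ℝ × ℝ => F q.1 q.2)
      (fderiv ℝ (fun q : ℝ × ℝ => F q.1 q.2) (r, θ)) (r, θ) :=
    (hF.differentiable one_ne_zero (r, θ)).hasFDerivAt
  have h2 : HasDerivAt (fun s : ℝ => (s, θ)) ((1 : ℝ), (0 : ℝ)) r :=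
    (hasDerivAt_id r).prodMk (hasDerivAt_const r θ)
  exact h1.comp_hasDerivAt r h2

lemma hasDerivAt_pd2 {F : ℝ → ℝ → ℝ} (hF : ContDiff ℝ 1 fun p : ℝ × ℝ => F p.1 p.2)
    (r θ : ℝ) : HasDerivAt (fun t => F r t) (pd2 F (r, θ)) θ := by
  have h1 : HasFDerivAt (fun q : ℝ × ℝ => F q.1 q.2)
      (fderiv ℝ (fun q : ℝ × ℝ => F q.1 q.2) (r, θ)) (r, θ) :=
    (hF.differentiable one_ne_zero (r, θ)).hasFDerivAt
  have h2 : HasDerivAt (fun t : ℝ => (r, t)) ((0 : ℝ), (1 : ℝ)) θ :=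
    (hasDerivAt_const θ r).prodMk (hasDerivAt_id θ)
  exact h1.comp_hasDerivAt θ h2

lemma deriv_eq_pd1 {F : ℝ → ℝ → ℝ} (hF : ContDiff ℝ 1 fun p : ℝ × ℝ => F p.1 p.2)
    (r θ : ℝ) : deriv (fun s => F s θ) r = pd1 F (r, θ) :=
  (hasDerivAt_pd1 hF r θ).deriv

lemma deriv_eq_pd2 {F : ℝ → ℝ → ℝ} (hF : ContDiff ℝ 1 fun p : ℝ × ℝ => F p.1 p.2)
    (r θ : ℝ) : deriv (fun t => F r t) θ = pd2 F (r, θ) :=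
  (hasDerivAt_pd2 hF r θ).deriv

lemma continuous_pd1 {F : ℝ → ℝ → ℝ} (hF : ContDiff ℝ 1 fun p : ℝ × ℝ => F p.1 p.2) :
    Continuous (pd1 F) :=
  (hF.continuous_fderiv one_ne_zero).clm_apply continuous_const

/-- decomposition of a plane linear functional applied to `(y, 1)`. -/
lemma fderiv_apply_decomp (φ : ℝ × ℝ →L[ℝ] ℝ) (y : ℝ) :
    φ (y, 1) = y * φ (1, 0) + φ (0, 1) := by
  have : ((y : ℝ), (1 : ℝ)) = y • ((1 : ℝ), (0 : ℝ)) + ((0 : ℝ), (1 : ℝ)) := by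
    simp [Prod.ext_iff]
  rw [this, map_add, map_smul]; simp [smul_eq_mul]

lemma mvt_bound {f f' : ℝ → ℝ} {p q C : ℝ}
    (h : ∀ z ∈ Icc p q, HasDerivAt f (f' z) z)
    (hC : ∀ z ∈ Icc p q, |f' z| ≤ C) {x y : ℝ}
    (hx : x ∈ Icc p q) (hy : y ∈ Icc p q) : |f y - f x| ≤ C * |y - x| := by
  have := Convex.norm_image_sub_le_of_norm_hasDerivWithin_le
    (f := f) (f' := f') (s := Icc p q) (C := C)
    (fun z hz => (h z hz).hasDerivWithinAt) (fun z hz => by simpa using hC z hz)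
    (convex_Icc p q) hx hy
  simpa [Real.norm_eq_abs] using this

lemma ode_unique_backward {F : ℝ → ℝ → ℝ}
    (hF : ContDiff ℝ 1 fun p : ℝ × ℝ => F p.1 p.2)
    {x y : ℝ → ℝ} (hx : ∀ θ, HasDerivAt x (F (x θ) θ) θ)
    (hy : ∀ θ, HasDerivAt y (F (y θ) θ) θ)
    {θ₀ : ℝ} (hθ₀ : 0 ≤ θ₀) (h : x θ₀ = y θ₀) : x 0 = y 0 := by
  have hxc : Continuous x := by
    rw [continuous_iff_continuousAt]; exact fun θ => (hx θ).continuousAt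
  have hyc : Continuous y := by
    rw [continuous_iff_continuousAt]; exact fun θ => (hy θ).continuousAt
  -- bound the trajectories
  obtain ⟨Nx, hNx⟩ := (isCompact_Icc (a := (0:ℝ)) (b := θ₀)).exists_bound_of_continuousOn
    hxc.continuousOn
  obtain ⟨Ny, hNy⟩ := (isCompact_Icc (a := (0:ℝ)) (b := θ₀)).exists_bound_of_continuousOn
    hyc.continuousOn
  set N : ℝ := max Nx Ny with hN
  have hxmem : ∀ τ ∈ Icc (0:ℝ) θ₀, x τ ∈ Icc (-N) N := fun τ hτ => by
    have := hNx τ hτ; rw [Real.norm_eq_abs, abs_le] at this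
    constructor <;> [linarith [neg_le_neg (le_max_left Nx Ny)]; exact this.2.trans (le_max_left _ _)]
  have hymem : ∀ τ ∈ Icc (0:ℝ) θ₀, y τ ∈ Icc (-N) N := fun τ hτ => by
    have := hNy τ hτ; rw [Real.norm_eq_abs, abs_le] at this
    constructor <;> [linarith [neg_le_neg (le_max_right Nx Ny)]; exact this.2.trans (le_max_right _ _)]
  -- Lipschitz constant
  obtain ⟨L, hL⟩ := ((isCompact_Icc (a := (-N:ℝ)) (b := N)).prod
    (isCompact_Icc (a := (0:ℝ)) (b := θ₀))).exists_bound_of_continuousOn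
    (continuous_pd1 hF).continuousOn
  have hLb : ∀ z ∈ Icc (-N) N, ∀ τ ∈ Icc (0:ℝ) θ₀, |pd1 F (z, τ)| ≤ L := fun z hz τ hτ => by
    simpa [Real.norm_eq_abs] using hL (z, τ) (Set.mk_mem_prod hz hτ)
  -- reversed difference
  set u : ℝ → ℝ := fun θ => x (θ₀ - θ) - y (θ₀ - θ) with hu
  have hu' : ∀ θ, HasDerivAt u
      (-(F (x (θ₀ - θ)) (θ₀ - θ) - F (y (θ₀ - θ)) (θ₀ - θ))) θ := by
    intro θ
    have hrev : HasDerivAt (fun θ : ℝ => θ₀ - θ) (-1) θ := by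
      simpa using (hasDerivAt_id θ).const_sub θ₀
    have h1 : HasDerivAt (fun θ : ℝ => x (θ₀ - θ)) (F (x (θ₀ - θ)) (θ₀ - θ) * (-1)) θ :=
      (hx (θ₀ - θ)).comp θ hrev
    have h2 : HasDerivAt (fun θ : ℝ => y (θ₀ - θ)) (F (y (θ₀ - θ)) (θ₀ - θ) * (-1)) θ :=
      (hy (θ₀ - θ)).comp θ hrev
    have := h1.fun_sub h2
    convert this using 1 <;> first | rfl | ring
  have key : ∀ θ ∈ Icc (0:ℝ) θ₀, ‖u θ‖ ≤ gronwallBound 0 L 0 (θ - 0) := by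
    apply norm_le_gronwallBound_of_norm_deriv_right_le
      (f' := fun θ => -(F (x (θ₀ - θ)) (θ₀ - θ) - F (y (θ₀ - θ)) (θ₀ - θ)))
    · exact ((hxc.comp (by continuity)).sub (hyc.comp (by continuity))).continuousOn
    · exact fun t _ => (hu' t).hasDerivWithinAt
    · simp [hu, h]
    · intro t ht
      have hτ : θ₀ - t ∈ Icc (0:ℝ) θ₀ := ⟨by linarith [ht.2], by linarith [ht.1]⟩
      have := mvt_bound (f := fun z => F z (θ₀ - t)) (f' := fun z => pd1 F (z, θ₀ - t))
        (p := -N) (q := N)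
        (fun z hz => hasDerivAt_pd1 hF z (θ₀ - t))
        (fun z hz => hLb z hz (θ₀ - t) hτ) (hymem _ hτ) (hxmem _ hτ)
      rw [Real.norm_eq_abs, Real.norm_eq_abs, abs_neg]
      calc |F (x (θ₀ - t)) (θ₀ - t) - F (y (θ₀ - t)) (θ₀ - t)|
          ≤ L * |x (θ₀ - t) - y (θ₀ - t)| := this
        _ ≤ L * |u t| + 0 := by simp [hu]
  have := key θ₀ (right_mem_Icc.mpr hθ₀)
  rw [gronwallBound_ε0] at this
  simp only [hu, sub_self, zero_mul] at this
  have : |x 0 - y 0| ≤ 0 := by simpa [Real.norm_eq_abs] using this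
  have := abs_nonpos_iff.mp (this)
  linarith [sub_eq_zero.mp this]

lemma flow_mono {F Ψ : ℝ → ℝ → ℝ}
    (hF : ContDiff ℝ 1 fun p : ℝ × ℝ => F p.1 p.2)
    (hΨ0 : ∀ r₀ : ℝ, Ψ 0 r₀ = r₀)
    (hflow : ∀ θ r₀ : ℝ, HasDerivAt (fun t => Ψ t r₀) (F (Ψ θ r₀) θ) θ)
    {s s' : ℝ} (h : s ≤ s') {θ : ℝ} (hθ : 0 ≤ θ) : Ψ θ s ≤ Ψ θ s' := by
  by_contra hlt
  push_neg at hlt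
  set D : ℝ → ℝ := fun τ => Ψ τ s - Ψ τ s' with hD
  have hDc : Continuous D := by
    apply Continuous.sub <;>
      (rw [continuous_iff_continuousAt]; intro τ; exact (hflow τ _).continuousAt)
  have hD0 : D 0 ≤ 0 := by simp [hD, hΨ0, h]
  have hDθ : 0 < D θ := by simp [hD]; linarith
  have : (0:ℝ) ∈ Icc (D 0) (D θ) := ⟨hD0, le_of_lt hDθ⟩
  obtain ⟨θ₀, hθ₀mem, hθ₀⟩ := intermediate_value_Icc hθ hDc.continuousOn this
  have heq : Ψ θ₀ s = Ψ θ₀ s' := by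
    have : Ψ θ₀ s - Ψ θ₀ s' = 0 := hθ₀
    linarith
  have := ode_unique_backward hF (x := fun τ => Ψ τ s) (y := fun τ => Ψ τ s')
    (fun τ => hflow τ s) (fun τ => hflow τ s') hθ₀mem.1 heq
  have : s = s' := by rw [← hΨ0 s, ← hΨ0 s']; exact this
  subst this
  simp [hD] at hDθ

lemma gronwallBound_linear {L ε T : ℝ} :
    gronwallBound 0 L ε T = ε * gronwallBound 0 L 1 T := by
  by_cases hL : L = 0
  · subst hL; rw [gronwallBound_K0, gronwallBound_K0]; ring
  · rw [gronwallBound_of_K_ne_0 hL, gronwallBound_of_K_ne_0 hL]; ring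

lemma gronwallBound_one_nonneg {L T : ℝ} (hL : 0 ≤ L) (hT : 0 ≤ T) :
    0 ≤ gronwallBound 0 L 1 T := by
  by_cases h : L = 0
  · subst h; rw [gronwallBound_K0]; simpa using hT
  · rw [gronwallBound_of_K_ne_0 h]
    have hL' : 0 < L := lt_of_le_of_ne hL (Ne.symm h)
    have : (1:ℝ) ≤ exp (L * T) := by
      rw [← Real.exp_zero]; exact Real.exp_le_exp.mpr (by positivity)
    have := sub_nonneg.mpr this
    positivity

lemma flow_hasDerivAt {F Ψ : ℝ → ℝ → ℝ}
    (hF : ContDiff ℝ 1 fun p : ℝ × ℝ => F p.1 p.2)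
    (hΨ0 : ∀ r₀ : ℝ, Ψ 0 r₀ = r₀)
    (hflow : ∀ θ r₀ : ℝ, HasDerivAt (fun t => Ψ t r₀) (F (Ψ θ r₀) θ) θ)
    {T : ℝ} (hT : 0 ≤ T) (r₀ : ℝ) :
    HasDerivAt (fun s => Ψ T s)
      (Real.exp (∫ θ in (0:ℝ)..T, pd1 F (Ψ θ r₀, θ))) r₀ := by
  have hcont : ∀ s : ℝ, Continuous fun θ => Ψ θ s := fun s => by
    rw [continuous_iff_continuousAt]; exact fun θ => (hflow θ s).continuousAt
  -- compact box containing all nearby trajectories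
  obtain ⟨Cl, hCl⟩ := (isCompact_Icc (a := (0:ℝ)) (b := T)).exists_bound_of_continuousOn
    (hcont (r₀ - 1)).continuousOn
  obtain ⟨Ch, hCh⟩ := (isCompact_Icc (a := (0:ℝ)) (b := T)).exists_bound_of_continuousOn
    (hcont (r₀ + 1)).continuousOn
  set N : ℝ := max Cl Ch with hN
  have hmem : ∀ s ∈ Icc (r₀ - 1) (r₀ + 1), ∀ θ ∈ Icc (0:ℝ) T, Ψ θ s ∈ Icc (-N) N := by
    intro s hs θ hθ
    have h1 : Ψ θ (r₀ - 1) ≤ Ψ θ s := flow_mono hF hΨ0 hflow hs.1 hθ.1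
    have h2 : Ψ θ s ≤ Ψ θ (r₀ + 1) := flow_mono hF hΨ0 hflow hs.2 hθ.1
    have b1 := hCl θ hθ; have b2 := hCh θ hθ
    rw [Real.norm_eq_abs, abs_le] at b1 b2
    constructor
    · have : -N ≤ -Cl := by simp [hN]
      linarith [b1.1]
    · have : Ch ≤ N := le_max_right _ _
      linarith [b2.2]
  -- Lipschitz constant
  obtain ⟨L₀, hL₀⟩ := ((isCompact_Icc (a := (-N:ℝ)) (b := N)).prod
    (isCompact_Icc (a := (0:ℝ)) (b := T))).exists_bound_of_continuousOn
    (continuous_pd1 hF).continuousOn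
  set L : ℝ := max L₀ 0 with hLdef
  have hL0 : 0 ≤ L := le_max_right _ _
  have hL : ∀ z ∈ Icc (-N) N, ∀ θ ∈ Icc (0:ℝ) T, |pd1 F (z, θ)| ≤ L := by
    intro z hz θ hθ
    have := hL₀ (z, θ) (Set.mk_mem_prod hz hθ)
    rw [Real.norm_eq_abs] at this
    exact this.trans (le_max_left _ _)
  have hr₀mem : r₀ ∈ Icc (r₀ - 1) (r₀ + 1) := by constructor <;> linarith
  -- Step A: Lipschitz dependence on initial conditions
  have stepA : ∀ s ∈ Icc (r₀ - 1) (r₀ + 1), ∀ θ ∈ Icc (0:ℝ) T,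
      |Ψ θ s - Ψ θ r₀| ≤ |s - r₀| * exp (L * θ) := by
    intro s hs
    have key := norm_le_gronwallBound_of_norm_deriv_right_le
      (f := fun θ => Ψ θ s - Ψ θ r₀)
      (f' := fun θ => F (Ψ θ s) θ - F (Ψ θ r₀) θ)
      (δ := |s - r₀|) (K := L) (ε := 0) (a := 0) (b := T)
      (((hcont s).sub (hcont r₀)).continuousOn)
      (fun t _ => ((hflow t s).sub (hflow t r₀)).hasDerivWithinAt)
      (by simp [hΨ0])
      (by
        intro t ht
        have htI : t ∈ Icc (0:ℝ) T := ⟨ht.1, le_of_lt ht.2⟩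
        have := mvt_bound (f := fun z => F z t) (f' := fun z => pd1 F (z, t))
          (p := -N) (q := N)
          (fun z _ => hasDerivAt_pd1 hF z t)
          (fun z hz => hL z hz t htI)
          (hmem r₀ hr₀mem t htI) (hmem s hs t htI)
        rw [Real.norm_eq_abs, Real.norm_eq_abs]
        calc |F (Ψ t s) t - F (Ψ t r₀) t| ≤ L * |Ψ t s - Ψ t r₀| := this
          _ ≤ L * |Ψ t s - Ψ t r₀| + 0 := by simp)
    intro θ hθ
    have := key θ hθ
    rwa [gronwallBound_ε0, sub_zero, Real.norm_eq_abs] at this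
  -- the linearized solution
  set a : ℝ → ℝ := fun θ => pd1 F (Ψ θ r₀, θ) with ha_def
  have ha_cont : Continuous a :=
    (continuous_pd1 hF).comp ((hcont r₀).prodMk continuous_id)
  set A : ℝ → ℝ := fun θ => ∫ t in (0:ℝ)..θ, a t with hA_def
  have hA : ∀ θ : ℝ, HasDerivAt A (a θ) θ := by
    intro θ
    exact intervalIntegral.integral_hasDerivAt_right
      (ha_cont.intervalIntegrable _ _)
      (ha_cont.stronglyMeasurable.stronglyMeasurableAtFilter)
      ha_cont.continuousAt
  rw [hasDerivAt_iff_isLittleO, Asymptotics.isLittleO_iff]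
  intro c hc
  set CT : ℝ := gronwallBound 0 L 1 T with hCT_def
  have hCT0 : 0 ≤ CT := gronwallBound_one_nonneg hL0 hT
  set ω : ℝ := c / (exp (L * T) * (CT + 1)) with hω_def
  have hω : 0 < ω := by positivity
  -- uniform continuity of pd1 F on the box
  have hUC := (((isCompact_Icc (a := (-N:ℝ)) (b := N)).prod
    (isCompact_Icc (a := (0:ℝ)) (b := T)))).uniformContinuousOn_of_continuous
    (continuous_pd1 hF).continuousOn
  rw [Metric.uniformContinuousOn_iff] at hUC
  obtain ⟨δ₂, hδ₂pos, hδ₂⟩ := hUC ω hω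
  set δ₀ : ℝ := min 1 (δ₂ / 2 * exp (-(L * T))) with hδ₀_def
  have hδ₀ : 0 < δ₀ := lt_min one_pos (by positivity)
  rw [Metric.eventually_nhds_iff]
  refine ⟨δ₀, hδ₀, ?_⟩
  intro s hs
  rw [Real.dist_eq] at hs
  have hsI : s ∈ Icc (r₀ - 1) (r₀ + 1) := by
    have h1 : |s - r₀| < 1 := lt_of_lt_of_le hs (min_le_left _ _)
    rw [abs_lt] at h1; constructor <;> linarith [h1.1, h1.2]
  have hsmall : |s - r₀| * exp (L * T) < δ₂ := by
    have h2 : |s - r₀| < δ₂ / 2 * exp (-(L * T)) :=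
      lt_of_lt_of_le hs (min_le_right _ _)
    have hexp : (0:ℝ) < exp (L * T) := Real.exp_pos _
    calc |s - r₀| * exp (L * T) < (δ₂ / 2 * exp (-(L * T))) * exp (L * T) := by
          apply mul_lt_mul_of_pos_right h2 hexp
      _ = δ₂ / 2 := by rw [mul_assoc, ← Real.exp_add]; simp
      _ < δ₂ := by linarith
  -- the quantity to estimate
  set f : ℝ → ℝ := fun θ => Ψ θ s - Ψ θ r₀ - (s - r₀) * exp (A θ) with hf_def
  have hf' : ∀ θ : ℝ, HasDerivAt f
      (F (Ψ θ s) θ - F (Ψ θ r₀) θ - (s - r₀) * (exp (A θ) * a θ)) θ := by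
    intro θ
    exact ((hflow θ s).sub (hflow θ r₀)).sub (((hA θ).exp).const_mul (s - r₀))
  set ε : ℝ := ω * (|s - r₀| * exp (L * T)) with hε_def
  have key := norm_le_gronwallBound_of_norm_deriv_right_le
    (f := f)
    (f' := fun θ => F (Ψ θ s) θ - F (Ψ θ r₀) θ - (s - r₀) * (exp (A θ) * a θ))
    (δ := 0) (K := L) (ε := ε) (a := 0) (b := T)
    (fun θ _ => (hf' θ).continuousAt.continuousWithinAt)
    (fun t _ => (hf' t).hasDerivWithinAt)
    (by simp [hf_def, hΨ0, intervalIntegral.integral_same, hA_def])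
    (by
      intro t ht
      have htI : t ∈ Icc (0:ℝ) T := ⟨ht.1, le_of_lt ht.2⟩
      set x : ℝ := Ψ t r₀ with hx_def
      set y : ℝ := Ψ t s with hy_def
      have hyx : |y - x| ≤ |s - r₀| * exp (L * t) := stepA s hsI t htI
      have hyx' : |y - x| ≤ |s - r₀| * exp (L * T) := by
        refine hyx.trans (mul_le_mul_of_nonneg_left ?_ (abs_nonneg _))
        exact Real.exp_le_exp.mpr (mul_le_mul_of_nonneg_left htI.2 hL0)
      have hxB : x ∈ Icc (-N) N := hmem r₀ hr₀mem t htI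
      have hyB : y ∈ Icc (-N) N := hmem s hsI t htI
      -- error term of linearization
      have hxI : x ∈ Icc (min x y) (max x y) := ⟨min_le_left _ _, le_max_left _ _⟩
      have hyI : y ∈ Icc (min x y) (max x y) := ⟨min_le_right _ _, le_max_right _ _⟩
      have hE : |F y t - F x t - pd1 F (x, t) * (y - x)| ≤ ω * |y - x| := by
        have hminB : min x y ∈ Icc (-N) N :=
          ⟨le_min hxB.1 hyB.1, (min_le_left _ _).trans hxB.2⟩
        have hmaxB : max x y ∈ Icc (-N) N :=
          ⟨hxB.1.trans (le_max_left _ _), max_le hxB.2 hyB.2⟩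
        have hmvt := mvt_bound (f := fun z => F z t - pd1 F (x, t) * z)
          (f' := fun z => pd1 F (z, t) - pd1 F (x, t))
          (p := min x y) (q := max x y)
          (fun z _ => by
            simpa using (hasDerivAt_pd1 hF z t).fun_sub
              ((hasDerivAt_id z).const_mul (pd1 F (x, t))))
          (fun z hz => by
            have hzB : z ∈ Icc (-N) N :=
              ⟨hminB.1.trans hz.1, hz.2.trans hmaxB.2⟩
            have hzx : |z - x| ≤ |y - x| := by
              rcases le_total x y with h | h
              · have h1 := hz.1; have h2 := hz.2
                rw [min_eq_left h] at h1; rw [max_eq_right h] at h2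
                rw [abs_of_nonneg (by linarith), abs_of_nonneg (by linarith)]
                linarith
              · have h1 := hz.1; have h2 := hz.2
                rw [min_eq_right h] at h1; rw [max_eq_left h] at h2
                rw [abs_of_nonpos (by linarith), abs_of_nonpos (by linarith)]
                linarith
            have hdist : dist ((z : ℝ), t) ((x : ℝ), t) < δ₂ := by
              rw [Prod.dist_eq]
              simp only [dist_self, Real.dist_eq]
              calc max |z - x| 0 = |z - x| := max_eq_left (abs_nonneg _)
                _ ≤ |y - x| := hzx
                _ ≤ |s - r₀| * exp (L * T) := hyx'
                _ < δ₂ := hsmall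
            have := hδ₂ (z, t) (Set.mk_mem_prod hzB htI) (x, t)
              (Set.mk_mem_prod hxB htI) hdist
            rw [Real.dist_eq] at this
            exact le_of_lt this)
          hxI hyI
        have hgE : (F y t - pd1 F (x, t) * y) - (F x t - pd1 F (x, t) * x)
            = F y t - F x t - pd1 F (x, t) * (y - x) := by ring
        rw [hgE] at hmvt
        exact hmvt
      -- assemble the bound on the derivative
      have haL : |pd1 F (x, t)| ≤ L := hL x hxB t htI
      have hat : a t = pd1 F (x, t) := rfl
      have hdecomp : F (Ψ t s) t - F (Ψ t r₀) t - (s - r₀) * (exp (A t) * a t)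
          = (F y t - F x t - pd1 F (x, t) * (y - x)) + pd1 F (x, t) * f t := by
        simp only [hf_def, hat, ← hx_def, ← hy_def]
        ring
      show ‖F (Ψ t s) t - F (Ψ t r₀) t - (s - r₀) * (exp (A t) * a t)‖ ≤ L * ‖f t‖ + ε
      rw [Real.norm_eq_abs, Real.norm_eq_abs, hdecomp]
      calc |(F y t - F x t - pd1 F (x, t) * (y - x)) + pd1 F (x, t) * f t|
          ≤ |F y t - F x t - pd1 F (x, t) * (y - x)| + |pd1 F (x, t) * f t| :=
            abs_add_le _ _
        _ ≤ ω * |y - x| + |pd1 F (x, t)| * |f t| := by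
            rw [abs_mul]; exact add_le_add_left hE _
        _ ≤ ω * (|s - r₀| * exp (L * T)) + L * |f t| := by
            apply add_le_add
            · exact mul_le_mul_of_nonneg_left hyx' (le_of_lt hω)
            · exact mul_le_mul_of_nonneg_right haL (abs_nonneg _)
        _ = L * |f t| + ε := by rw [hε_def]; ring)
  -- conclude
  have hkeyT := key T (right_mem_Icc.mpr hT)
  rw [sub_zero, gronwallBound_linear, ← hCT_def] at hkeyT
  have hgoal : Ψ T s - Ψ T r₀ - (s - r₀) • exp (∫ θ in (0:ℝ)..T, pd1 F (Ψ θ r₀, θ))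
      = f T := by
    simp only [hf_def, hA_def, ha_def, smul_eq_mul]
  have hεCT : ε * CT ≤ c * |s - r₀| := by
    have hexp : (0:ℝ) < exp (L * T) := Real.exp_pos _
    have hωc : ω * (exp (L * T) * (CT + 1)) = c := by
      rw [hω_def]; field_simp
    calc ε * CT = ω * (exp (L * T) * CT) * |s - r₀| := by rw [hε_def]; ring
      _ ≤ ω * (exp (L * T) * (CT + 1)) * |s - r₀| := by
          apply mul_le_mul_of_nonneg_right _ (abs_nonneg _)
          apply mul_le_mul_of_nonneg_left _ (le_of_lt hω)
          apply mul_le_mul_of_nonneg_left _ (le_of_lt hexp)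
          linarith
      _ = c * |s - r₀| := by rw [hωc]
  calc ‖(fun s => Ψ T s) s - (fun s => Ψ T s) r₀
        - (s - r₀) • exp (∫ θ in (0:ℝ)..T, pd1 F (Ψ θ r₀, θ))‖
      = ‖f T‖ := by rw [← hgoal]
    _ ≤ ε * CT := hkeyT
    _ ≤ c * |s - r₀| := hεCT
    _ = c * ‖s - r₀‖ := by rw [Real.norm_eq_abs]

lemma transport {F V Ψ : ℝ → ℝ → ℝ}
    (hF : ContDiff ℝ 1 fun p : ℝ × ℝ => F p.1 p.2)
    (hV : ContDiff ℝ 1 fun p : ℝ × ℝ => V p.1 p.2)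
    (hΨ0 : ∀ r₀ : ℝ, Ψ 0 r₀ = r₀)
    (hflow : ∀ θ r₀ : ℝ, HasDerivAt (fun t => Ψ t r₀) (F (Ψ θ r₀) θ) θ)
    (hPDE' : ∀ r θ : ℝ, pd2 V (r, θ) + pd1 V (r, θ) * F r θ = pd1 F (r, θ) * V r θ)
    (T r₀ : ℝ) :
    V (Ψ T r₀) T = V r₀ 0 * exp (∫ θ in (0:ℝ)..T, pd1 F (Ψ θ r₀, θ)) := by
  have hcont : Continuous fun θ => Ψ θ r₀ := by
    rw [continuous_iff_continuousAt]; exact fun θ => (hflow θ r₀).continuousAt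
  set a : ℝ → ℝ := fun θ => pd1 F (Ψ θ r₀, θ) with ha_def
  have ha_cont : Continuous a :=
    (continuous_pd1 hF).comp (hcont.prodMk continuous_id)
  set A : ℝ → ℝ := fun θ => ∫ t in (0:ℝ)..θ, a t with hA_def
  have hA : ∀ θ : ℝ, HasDerivAt A (a θ) θ := fun θ =>
    intervalIntegral.integral_hasDerivAt_right
      (ha_cont.intervalIntegrable _ _)
      (ha_cont.stronglyMeasurable.stronglyMeasurableAtFilter)
      ha_cont.continuousAt
  set W : ℝ → ℝ := fun θ => V (Ψ θ r₀) θ with hW_def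
  have hW : ∀ θ : ℝ, HasDerivAt W (a θ * W θ) θ := by
    intro θ
    have hγ : HasDerivAt (fun θ : ℝ => ((Ψ θ r₀ : ℝ), (θ : ℝ)))
        ((F (Ψ θ r₀) θ, 1)) θ := (hflow θ r₀).prodMk (hasDerivAt_id θ)
    have hVd : HasFDerivAt (fun q : ℝ × ℝ => V q.1 q.2)
        (fderiv ℝ (fun q : ℝ × ℝ => V q.1 q.2) (Ψ θ r₀, θ)) (Ψ θ r₀, θ) :=
      (hV.differentiable one_ne_zero _).hasFDerivAt
    have := HasFDerivAt.comp_hasDerivAt (f := fun θ : ℝ => ((Ψ θ r₀ : ℝ), (θ : ℝ))) θ hVd hγ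
    have heq : fderiv ℝ (fun q : ℝ × ℝ => V q.1 q.2) (Ψ θ r₀, θ) ((F (Ψ θ r₀) θ, 1))
        = a θ * W θ := by
      rw [fderiv_apply_decomp]
      have := hPDE' (Ψ θ r₀) θ
      simp only [pd1, pd2] at this ⊢
      simp only [ha_def, hW_def, pd1]
      linarith [this]
    rw [heq] at this
    exact this
  set Z : ℝ → ℝ := fun θ => W θ * exp (-A θ) with hZ_def
  have hZ : ∀ θ : ℝ, HasDerivAt Z 0 θ := by
    intro θ
    have := (hW θ).fun_mul ((hA θ).neg.exp)
    convert this using 1 <;> first | rfl | ring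
  have hconst : Z T = Z 0 :=
    is_const_of_deriv_eq_zero (fun θ => (hZ θ).differentiableAt)
      (fun θ => (hZ θ).deriv) T 0
  have hA0 : A 0 = 0 := intervalIntegral.integral_same
  have hZ0 : Z 0 = V r₀ 0 := by
    simp [hZ_def, hW_def, hA0, hΨ0]
  have hZT : Z T = V (Ψ T r₀) T * exp (-A T) := rfl
  rw [hZT, hZ0] at hconst
  have hexp : exp (-A T) * exp (A T) = 1 := by
    rw [← Real.exp_add]; simp
  calc V (Ψ T r₀) T = V (Ψ T r₀) T * (exp (-A T) * exp (A T)) := by rw [hexp, mul_one]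
    _ = (V (Ψ T r₀) T * exp (-A T)) * exp (A T) := by ring
    _ = V r₀ 0 * exp (A T) := by rw [hconst]


/-- If `Ψ` is the flow of `dr/dθ = F(r,θ)` (with `Ψ 0 r₀ = r₀`),
`Π r₀ = Ψ T r₀` the Poincaré return map of the periodic orbit `r = 0`, and `V` a `C¹`
inverse integrating factor near `r = 0`, then `V(Π r₀, T) = V(r₀, 0) * Π'(r₀)`
for all `r₀` in a neighborhood of `0`. -/
theorem stmt_2
    (T : ℝ) (hT : 0 < T)
    (F V : ℝ → ℝ → ℝ) (Ψ : ℝ → ℝ → ℝ)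
    (hFa : AnalyticOn ℝ (fun p : ℝ × ℝ => F p.1 p.2) Set.univ)
    (hF0 : ∀ θ : ℝ, F 0 θ = 0)
    (hFper : ∀ r θ : ℝ, F r (θ + T) = F r θ)
    (hVper : ∀ r θ : ℝ, V r (θ + T) = V r θ)
    (hVC1 : ContDiff ℝ 1 (fun p : ℝ × ℝ => V p.1 p.2))
    (hVnotnull : ∃ r θ : ℝ, V r θ ≠ 0)
    (hPDE : ∀ r θ : ℝ,
      deriv (fun t => V r t) θ + deriv (fun s => V s θ) r * F r θ
        = deriv (fun s => F s θ) r * V r θ)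
    (hΨ0 : ∀ r₀ : ℝ, Ψ 0 r₀ = r₀)
    (hflow : ∀ θ r₀ : ℝ, HasDerivAt (fun t => Ψ t r₀) (F (Ψ θ r₀) θ) θ) :
    ∀ᶠ r₀ in nhds (0 : ℝ),
      V (Ψ T r₀) T = V r₀ 0 * deriv (fun s => Ψ T s) r₀ := by
  have hFC1 : ContDiff ℝ 1 fun p : ℝ × ℝ => F p.1 p.2 := by
    rw [← contDiffOn_univ]
    exact (analyticOn_univ.mp hFa).contDiffOn uniqueDiffOn_univ
  have hPDE' : ∀ r θ : ℝ, pd2 V (r, θ) + pd1 V (r, θ) * F r θ = pd1 F (r, θ) * V r θ := by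
    intro r θ
    have := hPDE r θ
    rwa [deriv_eq_pd2 hVC1, deriv_eq_pd1 hVC1, deriv_eq_pd1 hFC1] at this
  apply Filter.Eventually.of_forall
  intro r₀
  rw [(flow_hasDerivAt hFC1 hΨ0 hflow hT.le r₀).deriv]
  exact transport hFC1 hVC1 hΨ0 hflow hPDE' T r₀
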